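/- Let e ≥ 3 be an integer and let u be an integer with u ≡ 0 (mod 4). In the quotient ring (ℤ/2^eℤ)[y] / ⟨y² − u·y + 1⟩, the image of y satisfies y^{2^{e−1}} = 1. -/

import Mathlib

open Polynomial

lemma aux_key (u : ℤ) (hu : (4:ℤ) ∣ u) {Q : Type*} [CommRing Q] (x : Q)
    (h : x ^ 2 = (u : Q) * x - 1) :
    ∀ k, 2 ≤ k → ∃ a b : ℤ, x ^ (2 ^ k) = (a : Q) + (b : Q) * x ∧
      (2 ^ (k + 2) : ℤ) ∣ (a - 1) ∧ (2 ^ (k + 1) : ℤ) ∣ b := by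
  intro k hk
  induction k with
  | zero => omega
  | succ n ih =>
    rcases Nat.lt_or_ge n 2 with hn | hn
    ·
      interval_cases n
      · omega
      · -- k = 2
        obtain ⟨v, hv⟩ := hu
        refine ⟨1 - u ^ 2, u ^ 3 - 2 * u, ?_, ⟨-v ^ 2, by rw [hv]; ring⟩,
          ⟨v * (8 * v ^ 2 - 1), by rw [hv]; ring⟩⟩
        have : x ^ (2 ^ 2) = (x ^ 2) ^ 2 := by ring
        rw [this]
        push_cast
        linear_combination (x ^ 2 + (u:Q) * x + (u:Q) ^ 2 - 1) * h
    · obtain ⟨a, b, hx, ⟨A, hA⟩, ⟨B, hB⟩⟩ := ih hn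
      refine ⟨a ^ 2 - b ^ 2, 2 * a * b + b ^ 2 * u, ?_, ?_, ?_⟩
      · have h2 : x ^ (2 ^ (n + 1)) = (x ^ (2 ^ n)) ^ 2 := by
          rw [← pow_mul, pow_succ]
        rw [h2, hx]
        push_cast
        linear_combination (b : Q) ^ 2 * h
      · -- 2^(n+3) ∣ a^2 - b^2 - 1 = (a-1)(a+1) - b^2
        have hb2 : (2 ^ (n + 3) : ℤ) ∣ b ^ 2 := by
          have : (2 ^ (n + 3) : ℤ) ∣ (2 ^ (n + 1)) ^ 2 := by
            rw [← pow_mul]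
            exact pow_dvd_pow 2 (by omega)
          exact this.trans (by rw [hB]; exact ⟨B ^ 2, by ring⟩)
        have ha' : a = 2 ^ (n + 2) * A + 1 := by linarith
        have h1 : (2 ^ (n + 3) : ℤ) ∣ (a - 1) * (a + 1) :=
          ⟨A * (2 ^ (n + 1) * A + 1), by rw [ha']; ring⟩
        have := dvd_sub h1 hb2
        rw [show a ^ 2 - b ^ 2 - 1 = (a - 1) * (a + 1) - b ^ 2 by ring]; exact this
      · obtain ⟨v, hv⟩ := hu
        exact ⟨a * B + 2 ^ (n + 2) * B ^ 2 * v, by rw [hB, hv]; ring⟩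

theorem pow_two_pow_eq_one_in_quotient (e : ℕ) (he : 3 ≤ e) (u : ℤ) (hu : (4 : ℤ) ∣ u) :
    (Ideal.Quotient.mk
        (Ideal.span {(Polynomial.X ^ 2 - Polynomial.C (u : ZMod (2 ^ e)) * Polynomial.X + 1 :
          Polynomial (ZMod (2 ^ e)))})
        Polynomial.X) ^ (2 ^ (e - 1)) = 1 := by
  set R := ZMod (2 ^ e)
  set f : R[X] := Polynomial.X ^ 2 - Polynomial.C (u : R) * Polynomial.X + 1
  set mk := Ideal.Quotient.mk (Ideal.span {f})
  set x : R[X] ⧸ Ideal.span {f} := mk Polynomial.X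
  have hf : mk f = 0 := Ideal.Quotient.eq_zero_iff_mem.mpr
    (Ideal.subset_span (Set.mem_singleton f))
  have hC : mk (Polynomial.C (u : R)) = ((u : ℤ) : R[X] ⧸ Ideal.span {f}) := by
    rw [show (Polynomial.C (u : R)) = ((u : ℤ) : R[X]) from map_intCast Polynomial.C u,
      map_intCast]
  have h : x ^ 2 = (u : R[X] ⧸ Ideal.span {f}) * x - 1 := by
    have : mk f = mk Polynomial.X ^ 2 - mk (Polynomial.C (u:R)) * mk Polynomial.X + 1 := by
      simp [f, map_add, map_sub, map_mul, map_pow]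
    rw [hf] at this
    rw [hC] at this
    linear_combination -this
  obtain ⟨a, b, hx, hA, hB⟩ := aux_key u hu x h (e - 1) (by omega)
  have ha : ((a : ℤ) : R) = 1 := by
    have h0 : ((a - 1 : ℤ) : R) = 0 := by
      rw [ZMod.intCast_zmod_eq_zero_iff_dvd]
      exact dvd_trans (by exact_mod_cast pow_dvd_pow (2:ℤ) (by omega)) hA
    push_cast at h0
    linear_combination h0
  have hb : ((b : ℤ) : R) = 0 := by
    rw [ZMod.intCast_zmod_eq_zero_iff_dvd]
    exact dvd_trans (by exact_mod_cast pow_dvd_pow (2:ℤ) (by omega)) hB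
  have haQ : ((a : ℤ) : R[X] ⧸ Ideal.span {f}) = 1 := by
    rw [← map_intCast (algebraMap R (R[X] ⧸ Ideal.span {f})) a, ha, map_one]
  have hbQ : ((b : ℤ) : R[X] ⧸ Ideal.span {f}) = 0 := by
    rw [← map_intCast (algebraMap R (R[X] ⧸ Ideal.span {f})) b, hb, map_zero]
  rw [hx, haQ, hbQ, zero_mul, add_zero]
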